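/- Let Σ_x and Σ_z be positive definite p×p matrices and Γ₁ an invertible p×p matrix. For p×p matrices L₁, L₂ with M := L₁Γ₁ᵀ + L₂ invertible, define g(L₁,L₂) = M⁻¹(L₂Σ_zL₂ᵀ + L₁Σ_xL₁ᵀ)(M⁻¹)ᵀ. Then for every α ∈ ℝᵖ, αᵀg(L₁,L₂)α ≥ αᵀ(Γ₁Σ_x⁻¹Γ₁ᵀ + Σ_z⁻¹)⁻¹α, with equality when L₁ = Γ₁Σ_x⁻¹ and L₂ = Σ_z⁻¹. -/

import Mathlib

open Matrix

/-- The quadratic form of the error variance in the class of linear models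
indexed by the operators L₁, L₂.  (`Sx`, `Sz` stand for Σ_x, Σ_z.) -/
noncomputable def errVar {p : ℕ} (Sx Sz Γ₁ L₁ L₂ : Matrix (Fin p) (Fin p) ℝ) :
    Matrix (Fin p) (Fin p) ℝ :=
  (L₁ * Γ₁ᵀ + L₂)⁻¹ * (L₂ * Sz * L₂ᵀ + L₁ * Sx * L₁ᵀ) * ((L₁ * Γ₁ᵀ + L₂)⁻¹)ᵀ

private lemma mulVec_dot_mulVec {p : ℕ} (A B : Matrix (Fin p) (Fin p) ℝ)
    (x y : Fin p → ℝ) : (A *ᵥ x) ⬝ᵥ (B *ᵥ y) = x ⬝ᵥ ((Aᵀ * B) *ᵥ y) := by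
  conv_rhs => rw [← mulVec_mulVec, dotProduct_mulVec, vecMul_transpose]

private lemma quad_transform {p : ℕ} (B K : Matrix (Fin p) (Fin p) ℝ) (α : Fin p → ℝ) :
    α ⬝ᵥ (Bᵀ * K * B) *ᵥ α = (B *ᵥ α) ⬝ᵥ (K *ᵥ (B *ᵥ α)) := by
  rw [mul_assoc, ← mulVec_mulVec, dotProduct_mulVec, vecMul_transpose, ← mulVec_mulVec]

private lemma dot_self_nonneg' {p : ℕ} (x : Fin p → ℝ) : 0 ≤ x ⬝ᵥ x :=
  Finset.sum_nonneg fun i _ => mul_self_nonneg (x i)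

/-- the error variance quadratic form is minimized (over all admissible
L₁, L₂) at L₁ = Γ₁Σ_x⁻¹, L₂ = Σ_z⁻¹, with minimum value (Γ₁Σ_x⁻¹Γ₁ᵀ + Σ_z⁻¹)⁻¹. -/
theorem stmt_5 {p : ℕ}
    (Sx Sz Γ₁ : Matrix (Fin p) (Fin p) ℝ)
    (hSx : Sx.PosDef) (hSz : Sz.PosDef) (hΓ₁ : IsUnit Γ₁.det) :
    (∀ L₁ L₂ : Matrix (Fin p) (Fin p) ℝ, IsUnit (L₁ * Γ₁ᵀ + L₂).det →
      ∀ α : Fin p → ℝ,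
        α ⬝ᵥ ((Γ₁ * Sx⁻¹ * Γ₁ᵀ + Sz⁻¹)⁻¹).mulVec α ≤
          α ⬝ᵥ (errVar Sx Sz Γ₁ L₁ L₂).mulVec α) ∧
    errVar Sx Sz Γ₁ (Γ₁ * Sx⁻¹) Sz⁻¹ = (Γ₁ * Sx⁻¹ * Γ₁ᵀ + Sz⁻¹)⁻¹ := by
  have hSxi : (Sx⁻¹).PosDef := hSx.inv
  have hSzi : (Sz⁻¹).PosDef := hSz.inv
  set A : Matrix (Fin p) (Fin p) ℝ := Γ₁ * Sx⁻¹ * Γ₁ᵀ + Sz⁻¹ with hAdef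
  have hA : A.PosDef := by
    have h1 := hSxi.posSemidef.mul_mul_conjTranspose_same Γ₁
    rw [conjTranspose_eq_transpose_of_trivial] at h1
    exact Matrix.PosDef.posSemidef_add h1 hSzi
  have hAunit : IsUnit A.det := hA.det_pos.ne'.isUnit
  have hAsymm : Aᵀ = A := by
    rw [← conjTranspose_eq_transpose_of_trivial]; exact hA.isHermitian
  have hAinv_symm : (A⁻¹)ᵀ = A⁻¹ := by rw [transpose_nonsing_inv, hAsymm]
  have hSxT : Sxᵀ = Sx := by
    rw [← conjTranspose_eq_transpose_of_trivial]; exact hSx.isHermitian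
  have hSzT : Szᵀ = Sz := by
    rw [← conjTranspose_eq_transpose_of_trivial]; exact hSz.isHermitian
  have hSxunit : IsUnit Sx.det := hSx.det_pos.ne'.isUnit
  have hSzunit : IsUnit Sz.det := hSz.det_pos.ne'.isUnit
  have hSxiT : (Sx⁻¹)ᵀ = Sx⁻¹ := by rw [transpose_nonsing_inv, hSxT]
  have hSziT : (Sz⁻¹)ᵀ = Sz⁻¹ := by rw [transpose_nonsing_inv, hSzT]
  constructor
  · intro L₁ L₂ hM α
    set M : Matrix (Fin p) (Fin p) ℝ := L₁ * Γ₁ᵀ + L₂ with hMdef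
    -- square roots
    open scoped MatrixOrder in set R : Matrix (Fin p) (Fin p) ℝ := CFC.sqrt Sx with hRdef
    open scoped MatrixOrder in set S : Matrix (Fin p) (Fin p) ℝ := CFC.sqrt Sz with hSdef
    have hRR : R * R = Sx := by open scoped MatrixOrder in exact CFC.sqrt_mul_sqrt_self Sx hSx.posSemidef.nonneg
    have hSS : S * S = Sz := by open scoped MatrixOrder in exact CFC.sqrt_mul_sqrt_self Sz hSz.posSemidef.nonneg
    have hRsymm : Rᵀ = R := by
      rw [← conjTranspose_eq_transpose_of_trivial]
      open scoped MatrixOrder in exact (CFC.sqrt_nonneg Sx).posSemidef.isHermitian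
    have hSsymm : Sᵀ = S := by
      rw [← conjTranspose_eq_transpose_of_trivial]
      open scoped MatrixOrder in exact (CFC.sqrt_nonneg Sz).posSemidef.isHermitian
    have hRunit : IsUnit R.det := by
      have h : R.det * R.det = Sx.det := by rw [← det_mul, hRR]
      exact isUnit_of_mul_isUnit_left (h ▸ hSxunit)
    have hSunit : IsUnit S.det := by
      have h : S.det * S.det = Sz.det := by rw [← det_mul, hSS]
      exact isUnit_of_mul_isUnit_left (h ▸ hSzunit)
    have hRiRi : R⁻¹ * R⁻¹ = Sx⁻¹ := by rw [← Matrix.mul_inv_rev, hRR]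
    have hSiSi : S⁻¹ * S⁻¹ = Sz⁻¹ := by rw [← Matrix.mul_inv_rev, hSS]
    have hRiT : (R⁻¹)ᵀ = R⁻¹ := by rw [transpose_nonsing_inv, hRsymm]
    have hSiT : (S⁻¹)ᵀ = S⁻¹ := by rw [transpose_nonsing_inv, hSsymm]
    -- the four "square-root factors"
    set u : Matrix (Fin p) (Fin p) ℝ := R * L₁ᵀ with hudef
    set v : Matrix (Fin p) (Fin p) ℝ := S * L₂ᵀ with hvdef
    set a : Matrix (Fin p) (Fin p) ℝ := R⁻¹ * Γ₁ᵀ with hadef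
    set b : Matrix (Fin p) (Fin p) ℝ := S⁻¹ with hbdef
    have huu : uᵀ * u = L₁ * Sx * L₁ᵀ := by
      rw [hudef, transpose_mul, hRsymm, transpose_transpose,
        show L₁ * R * (R * L₁ᵀ) = L₁ * (R * R) * L₁ᵀ by noncomm_ring, hRR]
    have hvv : vᵀ * v = L₂ * Sz * L₂ᵀ := by
      rw [hvdef, transpose_mul, hSsymm, transpose_transpose,
        show L₂ * S * (S * L₂ᵀ) = L₂ * (S * S) * L₂ᵀ by noncomm_ring, hSS]
    have haa : aᵀ * a = Γ₁ * Sx⁻¹ * Γ₁ᵀ := by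
      rw [hadef, transpose_mul, hRiT, transpose_transpose,
        show Γ₁ * R⁻¹ * (R⁻¹ * Γ₁ᵀ) = Γ₁ * (R⁻¹ * R⁻¹) * Γ₁ᵀ by noncomm_ring, hRiRi]
    have hbb : bᵀ * b = Sz⁻¹ := by rw [hbdef, hSiT, hSiSi]
    have hua : uᵀ * a = L₁ * Γ₁ᵀ := by
      rw [hudef, hadef, transpose_mul, hRsymm, transpose_transpose,
        show L₁ * R * (R⁻¹ * Γ₁ᵀ) = L₁ * (R * R⁻¹) * Γ₁ᵀ by noncomm_ring,
        mul_nonsing_inv _ hRunit, mul_one]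
    have hvb : vᵀ * b = L₂ := by
      rw [hvdef, hbdef, transpose_mul, hSsymm, transpose_transpose, mul_assoc,
        mul_nonsing_inv _ hSunit, mul_one]
    have hM' : uᵀ * a + vᵀ * b = M := by rw [hua, hvb]
    -- vectors
    set y : Fin p → ℝ := (M⁻¹)ᵀ *ᵥ α with hydef
    set c : Fin p → ℝ := A⁻¹ *ᵥ α with hcdef
    have hMy : Mᵀ *ᵥ y = α := by
      rw [hydef, mulVec_mulVec, ← transpose_mul, nonsing_inv_mul _ hM, transpose_one, one_mulVec]
    -- the value of the error-variance quadratic form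
    have hQg : α ⬝ᵥ (errVar Sx Sz Γ₁ L₁ L₂) *ᵥ α
        = (u *ᵥ y) ⬝ᵥ (u *ᵥ y) + (v *ᵥ y) ⬝ᵥ (v *ᵥ y) := by
      have e1 : (u *ᵥ y) ⬝ᵥ (u *ᵥ y) = y ⬝ᵥ ((uᵀ * u) *ᵥ y) := mulVec_dot_mulVec _ _ _ _
      have e2 : (v *ᵥ y) ⬝ᵥ (v *ᵥ y) = y ⬝ᵥ ((vᵀ * v) *ᵥ y) := mulVec_dot_mulVec _ _ _ _
      have eE : errVar Sx Sz Γ₁ L₁ L₂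
          = ((M⁻¹)ᵀ)ᵀ * (L₂ * Sz * L₂ᵀ + L₁ * Sx * L₁ᵀ) * (M⁻¹)ᵀ := by
        rw [transpose_transpose]; rfl
      rw [e1, e2, huu, hvv, ← dotProduct_add, ← add_mulVec, eE, quad_transform, ← hydef]
      rw [add_comm (L₁ * Sx * L₁ᵀ)]
    -- cross term
    have hT : (u *ᵥ y) ⬝ᵥ (a *ᵥ c) + (v *ᵥ y) ⬝ᵥ (b *ᵥ c) = α ⬝ᵥ A⁻¹ *ᵥ α := by
      have e1 : (u *ᵥ y) ⬝ᵥ (a *ᵥ c) = y ⬝ᵥ ((uᵀ * a) *ᵥ c) := mulVec_dot_mulVec _ _ _ _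
      have e2 : (v *ᵥ y) ⬝ᵥ (b *ᵥ c) = y ⬝ᵥ ((vᵀ * b) *ᵥ c) := mulVec_dot_mulVec _ _ _ _
      rw [e1, e2, ← dotProduct_add, ← add_mulVec, hM', dotProduct_mulVec, ← mulVec_transpose,
        hMy, hcdef]
    -- the minimum value
    have hcc : (a *ᵥ c) ⬝ᵥ (a *ᵥ c) + (b *ᵥ c) ⬝ᵥ (b *ᵥ c) = α ⬝ᵥ A⁻¹ *ᵥ α := by
      have e1 : (a *ᵥ c) ⬝ᵥ (a *ᵥ c) = c ⬝ᵥ ((aᵀ * a) *ᵥ c) := mulVec_dot_mulVec _ _ _ _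
      have e2 : (b *ᵥ c) ⬝ᵥ (b *ᵥ c) = c ⬝ᵥ ((bᵀ * b) *ᵥ c) := mulVec_dot_mulVec _ _ _ _
      rw [e1, e2, haa, hbb, ← dotProduct_add, ← add_mulVec, ← hAdef]
      calc c ⬝ᵥ A *ᵥ c = (A⁻¹ *ᵥ α) ⬝ᵥ (A *ᵥ (A⁻¹ *ᵥ α)) := by rw [hcdef]
        _ = (A⁻¹ *ᵥ α) ⬝ᵥ ((A * A⁻¹) *ᵥ α) := by rw [mulVec_mulVec]
        _ = (A⁻¹ *ᵥ α) ⬝ᵥ α := by rw [mul_nonsing_inv _ hAunit, one_mulVec]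
        _ = α ⬝ᵥ A⁻¹ *ᵥ α := dotProduct_comm _ _
    -- nonnegativity of the residual
    have key : 0 ≤ (u *ᵥ y - a *ᵥ c) ⬝ᵥ (u *ᵥ y - a *ᵥ c)
        + (v *ᵥ y - b *ᵥ c) ⬝ᵥ (v *ᵥ y - b *ᵥ c) :=
      add_nonneg (dot_self_nonneg' _) (dot_self_nonneg' _)
    have expand : (u *ᵥ y - a *ᵥ c) ⬝ᵥ (u *ᵥ y - a *ᵥ c)
        + (v *ᵥ y - b *ᵥ c) ⬝ᵥ (v *ᵥ y - b *ᵥ c)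
        = α ⬝ᵥ (errVar Sx Sz Γ₁ L₁ L₂) *ᵥ α - α ⬝ᵥ A⁻¹ *ᵥ α := by
      simp only [dotProduct_sub, sub_dotProduct]
      have hsym1 : (a *ᵥ c) ⬝ᵥ (u *ᵥ y) = (u *ᵥ y) ⬝ᵥ (a *ᵥ c) := dotProduct_comm _ _
      have hsym2 : (b *ᵥ c) ⬝ᵥ (v *ᵥ y) = (v *ᵥ y) ⬝ᵥ (b *ᵥ c) := dotProduct_comm _ _
      rw [hsym1, hsym2]
      linarith [hQg, hT, hcc]
    linarith [key, expand.symm]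
  · -- equality at the optimum
    have h1 : Sz⁻¹ * Sz * (Sz⁻¹)ᵀ = Sz⁻¹ := by
      rw [hSziT, nonsing_inv_mul _ hSzunit, one_mul]
    have h2 : Γ₁ * Sx⁻¹ * Sx * (Γ₁ * Sx⁻¹)ᵀ = Γ₁ * Sx⁻¹ * Γ₁ᵀ := by
      rw [transpose_mul, hSxiT, nonsing_inv_mul_cancel_right _ _ hSxunit, ← mul_assoc]
    unfold errVar
    rw [h1, h2, show Sz⁻¹ + Γ₁ * Sx⁻¹ * Γ₁ᵀ = A from (add_comm _ _).trans hAdef.symm,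
      show Γ₁ * Sx⁻¹ * Γ₁ᵀ + Sz⁻¹ = A from hAdef.symm, hAinv_symm,
      nonsing_inv_mul _ hAunit, one_mul]
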